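/- arXiv:1403.4691 — 4 statements merged into one kernel-verified Lean document; each statement's English description precedes it below -/
import Mathlib

section
/- Let V : [0,∞) → ℝ be a function that is continuous and piecewise differentiable, and suppose on [0,T] its derivative satisfies V'(t) ≤ D·V(t) on a set of total measure μ and V'(t) ≤ −C·V(t) on the complementary set, where C, D > 0 and V ≥ 0. Then V(T) ≤ exp(Dμ − C(T−μ)) V(0). -/
open MeasureTheory Set Filter
open scoped Topology ENNReal

section AuxLyapunov

/-- If `ψ` is continuous on `[a,b]` and its right liminf-slope is `≤ 0` at every point
of `(a,b)` outside a finite set `E`, then `ψ b ≤ ψ a`. -/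
lemma antitone_endpoints_of_slope {E : Set ℝ} (hE : E.Finite) :
    ∀ (ψ : ℝ → ℝ) (a b : ℝ), a ≤ b → ContinuousOn ψ (Icc a b) →
      (∀ x ∈ Ioo a b \ E, ∀ r : ℝ, 0 < r → ∃ᶠ z in 𝓝[>] x, slope ψ x z < r) →
      ψ b ≤ ψ a := by
  refine Set.Finite.induction_on (motive := fun E _ => ∀ (ψ : ℝ → ℝ) (a b : ℝ), a ≤ b →
      ContinuousOn ψ (Icc a b) →
      (∀ x ∈ Ioo a b \ E, ∀ r : ℝ, 0 < r → ∃ᶠ z in 𝓝[>] x, slope ψ x z < r) →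
      ψ b ≤ ψ a) E hE ?_ ?_
  ·
    intro ψ a b hab hcont hslope
    rcases eq_or_lt_of_le hab with rfl | hlt
    · exact le_rfl
    have key : ∀ a' ∈ Ioo a b, ψ b ≤ ψ a' := by
      intro a' ha'
      have := image_le_of_liminf_slope_right_le_deriv_boundary
        (f := ψ) (a := a') (b := b) (B := fun _ => ψ a') (B' := fun _ => 0)
        (hcont.mono (Icc_subset_Icc ha'.1.le le_rfl)) le_rfl continuousOn_const
        (fun x _ => hasDerivWithinAt_const x _ _)
        (fun x hx r hr => hslope x ⟨⟨ha'.1.trans_le hx.1, hx.2⟩, notMem_empty x⟩ r hr)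
      exact this (right_mem_Icc.2 ha'.2.le)
    have hne : (𝓝[Ioo a b] a).NeBot := by
      rw [nhdsWithin_Ioo_eq_nhdsGT hlt]
      infer_instance
    have htend : Filter.Tendsto ψ (𝓝[Ioo a b] a) (𝓝 (ψ a)) :=
      (hcont a (left_mem_Icc.2 hab)).mono_left
        (nhdsWithin_mono a Ioo_subset_Icc_self)
    exact ge_of_tendsto htend (eventually_mem_nhdsWithin.mono fun a' ha' => key a' ha')
  · intro t E' ht hEfin IH
    intro ψ a b hab hcont hslope
    by_cases htab : t ∈ Ioo a b
    · have h1 : ψ t ≤ ψ a := by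
        refine IH ψ a t htab.1.le (hcont.mono (Icc_subset_Icc le_rfl htab.2.le)) ?_
        intro x hx r hr
        exact hslope x ⟨⟨hx.1.1, hx.1.2.trans htab.2⟩, by
          simp only [mem_insert_iff, not_or]
          exact ⟨ne_of_lt hx.1.2, hx.2⟩⟩ r hr
      have h2 : ψ b ≤ ψ t := by
        refine IH ψ t b htab.2.le (hcont.mono (Icc_subset_Icc htab.1.le le_rfl)) ?_
        intro x hx r hr
        exact hslope x ⟨⟨htab.1.trans hx.1.1, hx.1.2⟩, by
          simp only [mem_insert_iff, not_or]
          exact ⟨(ne_of_gt hx.1.1), hx.2⟩⟩ r hr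
      exact h2.trans h1
    · refine IH ψ a b hab hcont ?_
      intro x hx r hr
      refine hslope x ⟨hx.1, ?_⟩ r hr
      simp only [mem_insert_iff, not_or]
      exact ⟨fun h => htab (h ▸ hx.1), hx.2⟩

lemma measIoo_le_add {U : Set ℝ} (hU : volume U ≠ ⊤) {s t : ℝ} (hst : s ≤ t) :
    (volume (U ∩ Ioo 0 t)).toReal ≤ (volume (U ∩ Ioo 0 s)).toReal + (t - s) := by
  have hsub : U ∩ Ioo 0 t ⊆ (U ∩ Ioo 0 s) ∪ Ico s t := by
    rintro x ⟨hxU, hx0, hxt⟩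
    rcases lt_or_ge x s with h | h
    · exact Or.inl ⟨hxU, hx0, h⟩
    · exact Or.inr ⟨h, hxt⟩
  have h1 : volume (U ∩ Ioo 0 t) ≤ volume (U ∩ Ioo 0 s) + volume (Ico s t) :=
    (measure_mono hsub).trans (measure_union_le _ _)
  have hfin1 : volume (U ∩ Ioo 0 s) ≠ ⊤ :=
    ((measure_mono Set.inter_subset_left).trans_lt hU.lt_top).ne
  have h2 : volume (Ico s t) = ENNReal.ofReal (t - s) := by
    rw [Real.volume_Ico]
  calc (volume (U ∩ Ioo 0 t)).toReal
      ≤ (volume (U ∩ Ioo 0 s) + volume (Ico s t)).toReal := by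
        apply ENNReal.toReal_mono _ h1
        rw [h2]
        exact ENNReal.add_ne_top.2 ⟨hfin1, ENNReal.ofReal_ne_top⟩
    _ = (volume (U ∩ Ioo 0 s)).toReal + (t - s) := by
        rw [ENNReal.toReal_add hfin1 (by rw [h2]; exact ENNReal.ofReal_ne_top), h2,
          ENNReal.toReal_ofReal (sub_nonneg.2 hst)]

lemma measIoo_mono {U : Set ℝ} (hU : volume U ≠ ⊤) :
    Monotone (fun t => (volume (U ∩ Ioo 0 t)).toReal) := by
  intro s t hst
  apply ENNReal.toReal_mono ((measure_mono Set.inter_subset_left).trans_lt hU.lt_top).ne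
  exact measure_mono (Set.inter_subset_inter_right _ (Ioo_subset_Ioo le_rfl hst))

lemma measIoo_continuous {U : Set ℝ} (hU : volume U ≠ ⊤) :
    Continuous (fun t => (volume (U ∩ Ioo 0 t)).toReal) := by
  apply LipschitzWith.continuous (K := 1)
  apply LipschitzWith.of_dist_le_mul
  intro s t
  rw [NNReal.coe_one, one_mul, Real.dist_eq, Real.dist_eq]
  rcases le_total s t with h | h
  · rw [abs_sub_comm, abs_of_nonneg (sub_nonneg.2 (measIoo_mono hU h)),
      abs_of_nonpos (sub_nonpos.2 h)]
    have := measIoo_le_add hU h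
    linarith
  · rw [abs_of_nonneg (sub_nonneg.2 (measIoo_mono hU h)),
      abs_of_nonneg (sub_nonneg.2 h)]
    have := measIoo_le_add hU h
    linarith

lemma measIoo_hasDerivAt {U : Set ℝ} (hUo : IsOpen U) (hU : volume U ≠ ⊤) {u : ℝ}
    (huU : u ∈ U) (hu : 0 < u) :
    HasDerivAt (fun t => (volume (U ∩ Ioo 0 t)).toReal) 1 u := by
  obtain ⟨δ, hδ, hball⟩ := Metric.isOpen_iff.1 hUo u huU
  set m : ℝ → ℝ := fun t => (volume (U ∩ Ioo 0 t)).toReal with hm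
  have key : ∀ s t : ℝ, 0 < s → s ≤ t → Ico s t ⊆ U → m t = m s + (t - s) := by
    intro s t hs hst hIco
    have hset : U ∩ Ioo 0 t = (U ∩ Ioo 0 s) ∪ Ico s t := by
      ext x
      constructor
      · rintro ⟨hxU, hx0, hxt⟩
        rcases lt_or_ge x s with h | h
        · exact Or.inl ⟨hxU, hx0, h⟩
        · exact Or.inr ⟨h, hxt⟩
      · rintro (⟨hxU, hx0, hxs⟩ | hx)
        · exact ⟨hxU, hx0, hxs.trans_le hst⟩
        · exact ⟨hIco hx, hs.trans_le hx.1, hx.2⟩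
    have hdisj : Disjoint (U ∩ Ioo 0 s) (Ico s t) := by
      apply Set.disjoint_left.2
      rintro x ⟨_, _, hxs⟩ ⟨hsx, _⟩
      exact absurd hsx (not_le.2 hxs)
    have hfin : volume (U ∩ Ioo 0 s) ≠ ⊤ :=
      ((measure_mono Set.inter_subset_left).trans_lt hU.lt_top).ne
    have : volume (U ∩ Ioo 0 t) = volume (U ∩ Ioo 0 s) + volume (Ico s t) := by
      rw [hset, measure_union hdisj measurableSet_Ico]
    simp only [hm]
    rw [this, Real.volume_Ico, ENNReal.toReal_add hfin ENNReal.ofReal_ne_top,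
      ENNReal.toReal_ofReal (sub_nonneg.2 hst)]
  have heq : (fun s => s - u + m u) =ᶠ[𝓝 u] m := by
    have hmem : Metric.ball u (min δ u) ∈ 𝓝 u :=
      Metric.ball_mem_nhds u (lt_min hδ hu)
    filter_upwards [hmem] with s hs
    rw [Metric.mem_ball, Real.dist_eq] at hs
    rcases le_total u s with h | h
    · have : Ico u s ⊆ U := by
        intro x hx
        apply hball
        rw [Metric.mem_ball, Real.dist_eq, abs_of_nonneg (sub_nonneg.2 hx.1)]
        have : |s - u| < δ := lt_of_lt_of_le hs (min_le_left _ _)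
        rw [abs_of_nonneg (sub_nonneg.2 h)] at this
        linarith [hx.2]
      rw [key u s hu h this]; ring
    · have hs0 : 0 < s := by
        have : |s - u| < u := lt_of_lt_of_le hs (min_le_right _ _)
        rcases abs_lt.1 this with ⟨h1, _⟩
        linarith
      have : Ico s u ⊆ U := by
        intro x hx
        apply hball
        rw [Metric.mem_ball, Real.dist_eq, abs_of_nonpos (by linarith [hx.2] : x - u ≤ 0)]
        have : |s - u| < δ := lt_of_lt_of_le hs (min_le_left _ _)
        rw [abs_of_nonpos (sub_nonpos.2 h)] at this
        linarith [hx.1]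
      rw [key s u hs0 h this]; ring
  have hd : HasDerivAt (fun s => s - u + m u) 1 u :=
    ((hasDerivAt_id u).sub_const u).add_const (m u)
  exact hd.congr_of_eventuallyEq heq.symm

end AuxLyapunov

/-- Lyapunov growth/decay estimate: let `V : ℝ → ℝ` be nonnegative and continuous on `[0, T]`,
differentiable there except at finitely many points, with derivative `V'`. If `V' t ≤ D * V t`
on a measurable subset `S` of `[0, T]` of measure `μ` (the mismatch set) and
`V' t ≤ -C * V t` on the complement `[0, T] \ S`, then
`V T ≤ exp (D * μ - C * (T - μ)) * V 0`. -/
theorem lyapunov_growth_decay (C D T μ : ℝ) (hC : 0 < C) (hD : 0 < D) (hT : 0 < T)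
    (V V' : ℝ → ℝ) (S F : Set ℝ) (hF : F.Finite)
    (hS : MeasurableSet S) (hSsub : S ⊆ Set.Icc 0 T)
    (hμ : (volume S).toReal = μ)
    (hVnonneg : ∀ t ∈ Set.Icc (0:ℝ) T, 0 ≤ V t)
    (hVcont : ContinuousOn V (Set.Icc 0 T))
    (hderiv : ∀ t ∈ Set.Ioo (0:ℝ) T \ F, HasDerivAt V (V' t) t)
    (hmismatch : ∀ t ∈ (S ∩ Set.Ioo (0:ℝ) T) \ F, V' t ≤ D * V t)
    (hmatch : ∀ t ∈ (Set.Ioo (0:ℝ) T \ S) \ F, V' t ≤ -C * V t) :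
    V T ≤ Real.exp (D * μ - C * (T - μ)) * V 0 := by
  set K := C + D with hKdef
  suffices H : ∀ ε : ℝ, 0 < ε → V T ≤ Real.exp (K * (μ + ε) - C * T) * V 0 by
    have htend : Tendsto (fun ε : ℝ => Real.exp (K * (μ + ε) - C * T) * V 0) (𝓝[>] 0)
        (𝓝 (Real.exp (K * (μ + 0) - C * T) * V 0)) := by
      apply Tendsto.mono_left _ nhdsWithin_le_nhds
      exact Continuous.tendsto (by continuity) 0
    have hlim : V T ≤ Real.exp (K * (μ + 0) - C * T) * V 0 :=
      ge_of_tendsto htend (eventually_mem_nhdsWithin.mono fun ε hε => H ε hε)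
    have harg : K * (μ + 0) - C * T = D * μ - C * (T - μ) := by rw [hKdef]; ring
    rwa [harg] at hlim
  intro ε hε
  -- choose an open set `U ⊇ S` of measure `< μ + ε`
  have hSvol : volume S ≠ ⊤ := by
    refine ((measure_mono hSsub).trans_lt ?_).ne
    rw [Real.volume_Icc]
    exact ENNReal.ofReal_lt_top
  obtain ⟨U, hSU, hUo, hUvol⟩ := Set.exists_isOpen_lt_add S hSvol
    (ε := ENNReal.ofReal ε) (by simpa using (ENNReal.ofReal_pos.2 hε).ne')
  have hUfin : volume U ≠ ⊤ :=
    (hUvol.trans (ENNReal.add_lt_top.2 ⟨hSvol.lt_top, ENNReal.ofReal_lt_top⟩)).ne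
  set m : ℝ → ℝ := fun t => (volume (U ∩ Ioo 0 t)).toReal with hmdef
  have hm0 : m 0 = 0 := by
    simp [hmdef]
  have hmT : m T ≤ μ + ε := by
    have h1 : volume (U ∩ Ioo 0 T) ≤ volume U := measure_mono Set.inter_subset_left
    have h2 : (volume U).toReal ≤ μ + ε := by
      have hfin : volume S + ENNReal.ofReal ε ≠ ⊤ :=
        ENNReal.add_ne_top.2 ⟨hSvol, ENNReal.ofReal_ne_top⟩
      have := ENNReal.toReal_mono hfin hUvol.le
      rwa [ENNReal.toReal_add hSvol ENNReal.ofReal_ne_top, hμ,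
        ENNReal.toReal_ofReal hε.le] at this
    exact (ENNReal.toReal_mono hUfin h1).trans h2
  have hmmono : Monotone m := measIoo_mono hUfin
  have hmcont : Continuous m := measIoo_continuous hUfin
  set ψ : ℝ → ℝ := fun t => V t * Real.exp (C * t - K * m t) with hψdef
  have hψcont : ContinuousOn ψ (Icc 0 T) :=
    hVcont.mul (((continuous_const.mul continuous_id).sub
      (continuous_const.mul hmcont)).rexp.continuousOn)
  -- the slope estimate
  have hslope : ∀ x ∈ Ioo (0:ℝ) T \ F, ∀ r : ℝ, 0 < r → ∃ᶠ z in 𝓝[>] x, slope ψ x z < r := by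
    intro x hx r hr
    obtain ⟨hxI, hxF⟩ := hx
    have hVx : 0 ≤ V x := hVnonneg x (Ioo_subset_Icc_self hxI)
    have hdV : HasDerivAt V (V' x) x := hderiv x ⟨hxI, hxF⟩
    by_cases hxU : x ∈ U
    · -- inside U: true derivative, with `V' x ≤ D * V x`
      have hVD : V' x ≤ D * V x := by
        by_cases hxS : x ∈ S
        · exact hmismatch x ⟨⟨hxS, hxI⟩, hxF⟩
        · have := hmatch x ⟨⟨hxI, hxS⟩, hxF⟩
          nlinarith
      have hm' : HasDerivAt m 1 x := measIoo_hasDerivAt hUo hUfin hxU hxI.1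
      have hinner : HasDerivAt (fun t => C * t - K * m t) (C * 1 - K * 1) x :=
        ((hasDerivAt_id x).const_mul C).sub (hm'.const_mul K)
      have hexp := hinner.exp
      have hψd : HasDerivAt ψ
          (V' x * Real.exp (C * x - K * m x) +
            V x * (Real.exp (C * x - K * m x) * (C * 1 - K * 1))) x := hdV.mul hexp
      have hd0 : V' x * Real.exp (C * x - K * m x) +
          V x * (Real.exp (C * x - K * m x) * (C * 1 - K * 1)) ≤ 0 := by
        have hepos : (0:ℝ) < Real.exp (C * x - K * m x) := Real.exp_pos _
        have : V' x + V x * (C - K) ≤ 0 := by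
          rw [hKdef]; nlinarith
        nlinarith
      have htends : Tendsto (slope ψ x) (𝓝[>] x) (𝓝 (V' x * Real.exp (C * x - K * m x) +
          V x * (Real.exp (C * x - K * m x) * (C * 1 - K * 1)))) :=
        ((hasDerivAt_iff_tendsto_slope.1 hψd).mono_left
          (nhdsWithin_mono x fun z hz => ne_of_gt hz))
      have : ∀ᶠ z in 𝓝[>] x, slope ψ x z < r :=
        htends (Iio_mem_nhds (lt_of_le_of_lt hd0 hr))
      exact this.frequently
    · -- outside U (hence outside S): compare with `g = V t * exp (C t)`
      have hxS : x ∉ S := fun h => hxU (hSU h)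
      have hVC : V' x ≤ -C * V x := hmatch x ⟨⟨hxI, hxS⟩, hxF⟩
      set g : ℝ → ℝ := fun t => V t * Real.exp (C * t) with hgdef
      have hgd : HasDerivAt g
          (V' x * Real.exp (C * x) + V x * (Real.exp (C * x) * (C * 1))) x :=
        hdV.mul ((hasDerivAt_id x).const_mul C).exp
      have hgd0 : V' x * Real.exp (C * x) + V x * (Real.exp (C * x) * (C * 1)) ≤ 0 := by
        have hepos : (0:ℝ) < Real.exp (C * x) := Real.exp_pos _
        nlinarith
      set e : ℝ := Real.exp (-(K * m x)) with hedef
      have hepos : 0 < e := Real.exp_pos _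
      have htends : Tendsto (slope g x) (𝓝[>] x) (𝓝 (V' x * Real.exp (C * x) +
          V x * (Real.exp (C * x) * (C * 1)))) :=
        ((hasDerivAt_iff_tendsto_slope.1 hgd).mono_left
          (nhdsWithin_mono x fun z hz => ne_of_gt hz))
      have hev1 : ∀ᶠ z in 𝓝[>] x, slope g x z < r / e :=
        htends (Iio_mem_nhds (lt_of_le_of_lt hgd0 (div_pos hr hepos)))
      have hev2 : ∀ᶠ z in 𝓝[>] x, z ∈ Ioc x T :=
        Ioc_mem_nhdsGT_of_mem ⟨le_rfl, hxI.2⟩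
      refine ((hev1.and hev2).mono ?_).frequently
      rintro z ⟨hz1, hz2⟩
      have hzx : x < z := hz2.1
      have hVz : 0 ≤ V z := hVnonneg z ⟨(hxI.1.trans hzx).le, hz2.2⟩
      have hmz : m x ≤ m z := hmmono hzx.le
      have hψle : ψ z - ψ x ≤ (g z - g x) * e := by
        have h1 : ψ z ≤ g z * e := by
          simp only [hψdef, hgdef, hedef]
          rw [mul_assoc, ← Real.exp_add]
          apply mul_le_mul_of_nonneg_left _ hVz
          apply Real.exp_le_exp.2
          nlinarith [mul_le_mul_of_nonneg_left hmz (by positivity : (0:ℝ) ≤ K)]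
        have h2 : ψ x = g x * e := by
          simp only [hψdef, hgdef, hedef]
          rw [mul_assoc, ← Real.exp_add]
          ring_nf
        linarith
      have hslope_le : slope ψ x z ≤ slope g x z * e := by
        rw [slope_def_field, slope_def_field]
        rw [div_mul_eq_mul_div, div_le_div_iff_of_pos_right (sub_pos.2 hzx)]
        linarith [hψle]
      calc slope ψ x z ≤ slope g x z * e := hslope_le
        _ < (r / e) * e := by
            exact mul_lt_mul_of_pos_right hz1 hepos
        _ = r := div_mul_cancel₀ r hepos.ne'
  -- apply the fencing lemma
  have hψT : ψ T ≤ ψ 0 :=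
    antitone_endpoints_of_slope hF ψ 0 T hT.le hψcont hslope
  have hψ0 : ψ 0 = V 0 := by
    simp [hψdef, hm0]
  have hψTval : ψ T = V T * Real.exp (C * T - K * m T) := rfl
  rw [hψTval, hψ0] at hψT
  have hexpTpos : (0:ℝ) < Real.exp (C * T - K * m T) := Real.exp_pos _
  have hVT : V T ≤ Real.exp (K * m T - C * T) * V 0 := by
    rw [show K * m T - C * T = -(C * T - K * m T) by ring, Real.exp_neg]
    rw [← le_div_iff₀ hexpTpos] at hψT
    rw [div_eq_inv_mul] at hψT
    exact hψT
  refine hVT.trans ?_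
  apply mul_le_mul_of_nonneg_right _ (hVnonneg 0 (left_mem_Icc.2 hT.le))
  apply Real.exp_le_exp.2
  have hKpos : (0:ℝ) < K := by rw [hKdef]; linarith
  nlinarith [mul_le_mul_of_nonneg_left hmT hKpos.le]
end

section
/- Fix a sampling period T_s > 0 and n ∈ ℕ with n ≥ 1. Let σ : [0,∞) → P be piecewise constant with dwell time n·T_s (consecutive switching times are at least n·T_s apart and there are no switches in [0, n·T_s)). Define the mismatch set M = {τ ≥ 0 : σ(τ) ≠ σ([τ]⁻)} where [τ]⁻ = k·T_s for k·T_s ≤ τ < (k+1)·T_s. Then for all t > 0, the total length μ(t,0) of M ∩ [0,t) satisfies μ(t,0) < t/n. -/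
open MeasureTheory

/-- The last sampling time `[τ]⁻ = k Tₛ` with `k Tₛ ≤ τ < (k+1) Tₛ`. -/
noncomputable def sampleTime (Ts τ : ℝ) : ℝ := ⌊τ / Ts⌋ * Ts

/-- `s` is a switching time of `σ`: `σ` is not constant on any neighborhood of `s`. -/
def IsSwitchTime (σ : ℝ → ℕ) (s : ℝ) : Prop :=
  ¬ ∃ ε > 0, ∀ u : ℝ, |u - s| < ε → σ u = σ s

/-- `σ` is right-continuous and piecewise constant. -/
def RightPiecewiseConstant (σ : ℝ → ℕ) : Prop :=
  ∀ s : ℝ, ∃ ε > 0, ∀ u ∈ Set.Ico s (s + ε), σ u = σ s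

/-- `σ` has dwell time `d`: consecutive switching times are at least `d` apart, and
there is no switch in `[0, d)`. -/
def HasDwellTime (σ : ℝ → ℕ) (d : ℝ) : Prop :=
  (∀ s t : ℝ, IsSwitchTime σ s → IsSwitchTime σ t → s < t → d ≤ t - s) ∧
  (∀ s ∈ Set.Ico (0 : ℝ) d, ¬ IsSwitchTime σ s)

/-- Total mismatch time `μ(t, t₀)`: the length of
`{τ ∈ [t₀, t) : σ τ ≠ σ [τ]⁻}`. -/
noncomputable def mismatchTime (Ts : ℝ) (σ : ℝ → ℕ) (t₀ t : ℝ) : ℝ :=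
  (volume {τ : ℝ | τ ∈ Set.Ico t₀ t ∧ σ τ ≠ σ (sampleTime Ts τ)}).toReal

/-- If `σ a ≠ σ b` for a right-continuous piecewise constant `σ`, there is a switch
time in `(a, b]`. -/
lemma exists_switchTime (σ : ℝ → ℕ) (hσ : RightPiecewiseConstant σ) {a b : ℝ}
    (hab : a ≤ b) (hne : σ a ≠ σ b) : ∃ s ∈ Set.Ioc a b, IsSwitchTime σ s := by
  by_contra h
  push_neg at h
  have hsw : ∀ s ∈ Set.Ioc a b, ∃ ε > 0, ∀ u : ℝ, |u - s| < ε → σ u = σ s := by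
    intro s hs
    have := h s hs
    unfold IsSwitchTime at this
    exact not_not.mp this
  have hltab : a < b := hab.lt_of_ne (by rintro rfl; exact hne rfl)
  set T := {u : ℝ | u ∈ Set.Icc a b ∧ ∀ v ∈ Set.Icc a u, σ v = σ a} with hT
  have haT : a ∈ T := ⟨⟨le_refl a, hab⟩, fun v hv => by
    have : v = a := le_antisymm hv.2 hv.1
    rw [this]⟩
  have hbdd : BddAbove T := ⟨b, fun u hu => hu.1.2⟩
  set c := sSup T with hc
  have hac : a ≤ c := le_csSup hbdd haT
  have hcb : c ≤ b := csSup_le ⟨a, haT⟩ fun u hu => hu.1.2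
  have hlow : ∀ v, a ≤ v → v < c → σ v = σ a := by
    intro v hv hvc
    obtain ⟨u, huT, hvu⟩ := exists_lt_of_lt_csSup ⟨a, haT⟩ hvc
    exact huT.2 v ⟨hv, hvu.le⟩
  have hceq : σ c = σ a := by
    rcases eq_or_lt_of_le hac with h' | h'
    · rw [← h']
    · obtain ⟨ε, hε, hconst⟩ := hsw c ⟨h', hcb⟩
      have hva : a ≤ max a (c - ε / 2) := le_max_left _ _
      have hvc : max a (c - ε / 2) < c := max_lt h' (by linarith)
      have h1 : σ (max a (c - ε / 2)) = σ a := hlow _ hva hvc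
      have h2 : σ (max a (c - ε / 2)) = σ c := by
        apply hconst
        rw [abs_lt]
        have hge : c - ε / 2 ≤ max a (c - ε / 2) := le_max_right _ _
        constructor <;> [linarith; linarith]
      rw [← h2, h1]
  have hcT : c ∈ T := ⟨⟨hac, hcb⟩, fun v hv => by
    rcases eq_or_lt_of_le hv.2 with h' | h'
    · rw [h', hceq]
    · exact hlow v hv.1 h'⟩
  have hcbeq : c = b := by
    by_contra hne'
    have hclt : c < b := hcb.lt_of_ne hne'
    obtain ⟨ε, hε, hconst⟩ := hσ c
    have huT : min b (c + ε / 2) ∈ T := by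
      refine ⟨⟨le_min (hac.trans hcb) (by linarith), min_le_left _ _⟩, ?_⟩
      intro v hv
      rcases le_or_gt v c with h' | h'
      · exact hcT.2 v ⟨hv.1, h'⟩
      · have hv2 : v ≤ c + ε / 2 := le_trans hv.2 (min_le_right _ _)
        have : σ v = σ c := hconst v ⟨h'.le, by linarith⟩
        rw [this, hceq]
    have h1 : min b (c + ε / 2) ≤ c := le_csSup hbdd huT
    have h2 : c < min b (c + ε / 2) := lt_min hclt (by linarith)
    linarith
  exact hne (hcT.2 b ⟨hab, hcbeq.ge⟩).symm

/-- If `σ` is a piecewise-constant switching signal with dwell time `n Tₛ` (`n ≥ 1`),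
then the total mismatch time on `[0, t)` satisfies `μ(t, 0) < t / n` for all `t > 0`. -/
theorem mismatchTime_lt_of_dwellTime (Ts : ℝ) (hTs : 0 < Ts) (n : ℕ) (hn : 1 ≤ n)
    (σ : ℝ → ℕ) (hσ : RightPiecewiseConstant σ) (hdwell : HasDwellTime σ (n * Ts))
    (t : ℝ) (ht : 0 < t) :
    mismatchTime Ts σ 0 t < t / n := by
  have hn' : (0 : ℝ) < n := by exact_mod_cast hn
  set d : ℝ := n * Ts with hd
  have hd0 : 0 < d := mul_pos hn' hTs
  set S := {s : ℝ | s ∈ Set.Ioo 0 t ∧ IsSwitchTime σ s} with hS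
  have hSd : ∀ s ∈ S, d ≤ s := by
    intro s hs
    by_contra hcon
    push_neg at hcon
    exact hdwell.2 s ⟨hs.1.1.le, hcon⟩ hs.2
  have hfloor_mono : ∀ s ∈ S, ∀ s' ∈ S, s < s' → ⌊s / d⌋ + 1 ≤ ⌊s' / d⌋ := by
    intro s hs s' hs' hlt
    have hsep : d ≤ s' - s := hdwell.1 s s' hs.2 hs'.2 hlt
    have h1 : s / d + 1 ≤ s' / d := by
      rw [div_add' _ _ _ hd0.ne', div_le_div_iff_of_pos_right hd0]
      linarith
    calc ⌊s / d⌋ + 1 = ⌊s / d + 1⌋ := (Int.floor_add_one _).symm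
      _ ≤ ⌊s' / d⌋ := Int.floor_mono h1
  have hinj : Set.InjOn (fun s => ⌊s / d⌋) S := by
    intro s hs s' hs' heq
    by_contra hne'
    rcases lt_or_gt_of_ne hne' with hlt | hlt
    · have := hfloor_mono s hs s' hs' hlt; simp only at heq; omega
    · have := hfloor_mono s' hs' s hs hlt; simp only at heq; omega
  set K : ℤ := ⌈t / d⌉ - 1 with hK
  have himg : (fun s => ⌊s / d⌋) '' S ⊆ Set.Icc 1 K := by
    rintro _ ⟨s, hs, rfl⟩
    constructor
    · exact Int.le_floor.mpr (by
        push_cast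
        exact (one_le_div hd0).mpr (hSd s hs))
    · have h1 : ((⌊s / d⌋ : ℤ) : ℝ) < t / d := by
        refine lt_of_le_of_lt (Int.floor_le _) ?_
        gcongr
        exact hs.1.2
      have h2 : ⌊s / d⌋ < ⌈t / d⌉ := Int.lt_ceil.mpr h1
      show ⌊s / d⌋ ≤ K
      omega
  have hfin : S.Finite := Set.Finite.of_finite_image ((Set.finite_Icc 1 K).subset himg) hinj
  set F := hfin.toFinset with hF
  have hcard : F.card ≤ K.toNat := by
    have h1 : F.card ≤ (Finset.Icc (1 : ℤ) K).card := by
      apply Finset.card_le_card_of_injOn (fun s => ⌊s / d⌋)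
      · intro a ha
        have haS : a ∈ S := hfin.mem_toFinset.mp ha
        have := himg ⟨a, haS, rfl⟩
        simpa [Finset.mem_Icc] using this
      · intro a ha b hb
        exact hinj (hfin.mem_toFinset.mp ha) (hfin.mem_toFinset.mp hb)
    simpa [Int.card_Icc] using h1
  have hKd : (K.toNat : ℝ) * d < t := by
    rcases le_or_gt K 0 with hK0 | hK0
    · rw [Int.toNat_of_nonpos hK0]
      simpa using ht
    · have h1 : (K : ℝ) < t / d := by
        have h2 := Int.ceil_lt_add_one (t / d)
        rw [hK]
        push_cast
        linarith
      have hcast : ((K.toNat : ℕ) : ℝ) = (K : ℝ) := by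
        exact_mod_cast congrArg (fun z : ℤ => (z : ℝ)) (Int.toNat_of_nonneg hK0.le)
      rw [hcast]
      calc (K : ℝ) * d < (t / d) * d := mul_lt_mul_of_pos_right h1 hd0
        _ = t := div_mul_cancel₀ t hd0.ne'
  have hsub : {τ : ℝ | τ ∈ Set.Ico 0 t ∧ σ τ ≠ σ (sampleTime Ts τ)} ⊆
      ⋃ s ∈ F, Set.Ico s (s + Ts) := by
    rintro τ ⟨⟨hτ0, hτt⟩, hτne⟩
    have ha0 : 0 ≤ sampleTime Ts τ :=
      mul_nonneg (by exact_mod_cast Int.floor_nonneg.mpr (div_nonneg hτ0 hTs.le)) hTs.le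
    have haτ : sampleTime Ts τ ≤ τ := by
      unfold sampleTime
      calc (⌊τ / Ts⌋ : ℝ) * Ts ≤ (τ / Ts) * Ts :=
            mul_le_mul_of_nonneg_right (Int.floor_le _) hTs.le
        _ = τ := div_mul_cancel₀ _ hTs.ne'
    have hτa : τ < sampleTime Ts τ + Ts := by
      have h1 := Int.lt_floor_add_one (τ / Ts)
      have h2 : τ / Ts * Ts < ((⌊τ / Ts⌋ : ℝ) + 1) * Ts := mul_lt_mul_of_pos_right h1 hTs
      rw [div_mul_cancel₀ _ hTs.ne'] at h2
      unfold sampleTime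
      nlinarith
    obtain ⟨s, hsmem, hsw⟩ := exists_switchTime σ hσ haτ (Ne.symm hτne)
    have hsS : s ∈ S := ⟨⟨lt_of_le_of_lt ha0 hsmem.1, lt_of_le_of_lt hsmem.2 hτt⟩, hsw⟩
    apply Set.mem_biUnion (hfin.mem_toFinset.mpr hsS)
    exact ⟨hsmem.2, by linarith [hsmem.1]⟩
  have hvol : volume {τ : ℝ | τ ∈ Set.Ico 0 t ∧ σ τ ≠ σ (sampleTime Ts τ)} ≤
      (F.card : ENNReal) * ENNReal.ofReal Ts := by
    calc volume {τ : ℝ | τ ∈ Set.Ico 0 t ∧ σ τ ≠ σ (sampleTime Ts τ)}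
        ≤ volume (⋃ s ∈ F, Set.Ico s (s + Ts)) := measure_mono hsub
      _ ≤ ∑ s ∈ F, volume (Set.Ico s (s + Ts)) := measure_biUnion_finset_le _ _
      _ = ∑ s ∈ F, ENNReal.ofReal Ts := by
          refine Finset.sum_congr rfl fun s _ => ?_
          rw [Real.volume_Ico]
          ring_nf
      _ = (F.card : ENNReal) * ENNReal.ofReal Ts := by
          rw [Finset.sum_const, nsmul_eq_mul]
  have hle : mismatchTime Ts σ 0 t ≤ (F.card : ℝ) * Ts := by
    unfold mismatchTime
    apply ENNReal.toReal_le_of_le_ofReal (by positivity)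
    calc volume {τ : ℝ | τ ∈ Set.Ico 0 t ∧ σ τ ≠ σ (sampleTime Ts τ)}
        ≤ (F.card : ENNReal) * ENNReal.ofReal Ts := hvol
      _ = ENNReal.ofReal ((F.card : ℝ) * Ts) := by
          rw [ENNReal.ofReal_mul (by positivity)]
          simp
  have hfin2 : (F.card : ℝ) * Ts < t / n := by
    have h1 : (F.card : ℝ) * Ts ≤ (K.toNat : ℝ) * Ts :=
      mul_le_mul_of_nonneg_right (by exact_mod_cast hcard) hTs.le
    have h2 : (K.toNat : ℝ) * Ts < t / n := by
      rw [lt_div_iff₀ hn']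
      calc (K.toNat : ℝ) * Ts * n = (K.toNat : ℝ) * d := by rw [hd]; ring
        _ < t := hKd
    linarith
  linarith
end

section
/- Fix T_s > 0 and n ∈ ℕ, n ≥ 1. Let σ have dwell time n·T_s, and suppose T₀ ≥ 0 satisfies σ(T₀) ≠ σ([T₀]⁻). Then for all t > T₀, the total mismatch time satisfies μ(t, T₀) < T_s + (t − T₀)/n. -/
open MeasureTheory

lemma exists_switch_of_ne (σ : ℝ → ℕ) {a b : ℝ} (hab : a ≤ b) (hne : σ a ≠ σ b) :
    ∃ s ∈ Set.Icc a b, IsSwitchTime σ s := by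
  by_contra h
  push_neg at h
  have hlc : IsLocallyConstant (fun x : Set.Icc a b => σ x) := by
    rw [IsLocallyConstant.iff_exists_open]
    intro x
    obtain ⟨ε, hε, hconst⟩ := not_not.mp (h x x.2)
    refine ⟨Subtype.val ⁻¹' Metric.ball (x : ℝ) ε, Metric.isOpen_ball.preimage
      continuous_subtype_val, by simp [Metric.mem_ball, hε], ?_⟩
    intro y hy
    exact hconst y (by rw [Set.mem_preimage, Metric.mem_ball, Real.dist_eq] at hy; exact hy)
  haveI : PreconnectedSpace (Set.Icc a b) := Subtype.preconnectedSpace isPreconnected_Icc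
  exact hne (hlc.apply_eq_of_preconnectedSpace ⟨a, le_refl a, hab⟩ ⟨b, hab, le_refl b⟩)

lemma sampleTime_le {Ts : ℝ} (hTs : 0 < Ts) (τ : ℝ) : sampleTime Ts τ ≤ τ := by
  have := Int.floor_le (τ / Ts)
  have h2 := mul_le_mul_of_nonneg_right this hTs.le
  rwa [div_mul_cancel₀ _ hTs.ne'] at h2

lemma lt_sampleTime_add {Ts : ℝ} (hTs : 0 < Ts) (τ : ℝ) : τ < sampleTime Ts τ + Ts := by
  have := Int.lt_floor_add_one (τ / Ts)
  have h2 := mul_lt_mul_of_pos_right this hTs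
  rw [div_mul_cancel₀ _ hTs.ne'] at h2
  calc τ < (↑⌊τ / Ts⌋ + 1) * Ts := h2
  _ = sampleTime Ts τ + Ts := by rw [sampleTime]; ring


lemma mismatch_arith {Ts N d X T₀ t s₀ s₁ C S : ℝ} (hTs : 0 < Ts) (hN : 0 < N)
    (hd_def : d = N * Ts) (hTsd : Ts ≤ d) (hX_def : X = t - T₀) (hX0 : 0 < X)
    (hcount : C * d ≤ s₁ + d - s₀)
    (h1 : S ≤ s₀ + Ts - T₀ + (t - s₁) + (C - 2) * Ts)
    (h2 : S ≤ C * Ts) :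
    S < Ts + X / N := by
  have hd : 0 < d := by rw [hd_def]; positivity
  rcases lt_or_ge ((C - 1) * d) X with hc | hc
  · have hkey : (C - 1) * Ts < X / N := by
      rw [lt_div_iff₀ hN]
      calc (C - 1) * Ts * N = (C - 1) * d := by rw [hd_def]; ring
      _ < X := hc
    nlinarith
  · have hs1ge : s₀ + (C - 1) * d ≤ s₁ := by linarith
    have htot : S ≤ X + (C - 1) * (Ts - d) := by nlinarith [h1, hs1ge]
    have hXn : X / N = X * Ts / d := by
      rw [hd_def, mul_comm N Ts, mul_comm X Ts, mul_div_mul_left _ _ hTs.ne']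
    have hfinal : X + (C - 1) * (Ts - d) ≤ X / N := by
      rw [hXn, le_div_iff₀ hd]
      nlinarith [mul_nonneg (sub_nonneg.mpr hc) (sub_nonneg.mpr hTsd)]
    linarith

/-- If `σ` has dwell time `n Tₛ` (`n ≥ 1`) and the modes mismatch at time `T₀ ≥ 0`
(i.e. `σ T₀ ≠ σ [T₀]⁻`), then the total mismatch time on `[T₀, t)` satisfies
`μ(t, T₀) < Tₛ + (t - T₀) / n` for all `t > T₀`. -/
theorem mismatchTime_lt_of_dwellTime_of_mismatch (Ts : ℝ) (hTs : 0 < Ts) (n : ℕ) (hn : 1 ≤ n)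
    (σ : ℝ → ℕ) (hσ : RightPiecewiseConstant σ) (hdwell : HasDwellTime σ (n * Ts))
    (T₀ : ℝ) (hT₀ : 0 ≤ T₀) (hmm : σ T₀ ≠ σ (sampleTime Ts T₀))
    (t : ℝ) (ht : T₀ < t) :
    mismatchTime Ts σ T₀ t < Ts + (t - T₀) / n := by
  classical
  have hn' : (1 : ℝ) ≤ (n : ℝ) := by exact_mod_cast hn
  have hN : (0 : ℝ) < (n : ℝ) := by linarith
  set d : ℝ := (n : ℝ) * Ts with hd_def
  have hd : 0 < d := by positivity
  have hTsd : Ts ≤ d := by nlinarith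
  set X : ℝ := t - T₀ with hX_def
  have hX0 : 0 < X := by simp [hX_def]; linarith
  -- the set of relevant switch times
  set F : Set ℝ := {s | IsSwitchTime σ s ∧ s ∈ Set.Ioo (T₀ - Ts) t} with hF_def
  -- separation of switch times
  have hsep : ∀ s ∈ F, ∀ s' ∈ F, s < s' → d ≤ s' - s := fun s hs s' hs' hlt =>
    hdwell.1 s s' hs.1 hs'.1 hlt
  -- F is finite
  have hinj : Set.InjOn (fun s : ℝ => ⌊(s - T₀) / d⌋) F := by
    intro s hs s' hs' heq
    by_contra hne
    rcases lt_or_gt_of_ne hne with hlt | hlt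
    · have h1 : d ≤ s' - s := hsep s hs s' hs' hlt
      have h2 : (s - T₀) / d + 1 ≤ (s' - T₀) / d := by
        rw [div_add' _ _ _ hd.ne', div_le_div_iff_of_pos_right hd]; linarith
      have h3 : ⌊(s - T₀) / d⌋ + 1 ≤ ⌊(s' - T₀) / d⌋ := by
        calc ⌊(s - T₀) / d⌋ + 1 = ⌊(s - T₀) / d + 1⌋ := by rw [Int.floor_add_one]
        _ ≤ _ := Int.floor_mono h2
      simp only at heq; omega
    · have h1 : d ≤ s - s' := hsep s' hs' s hs hlt
      have h2 : (s' - T₀) / d + 1 ≤ (s - T₀) / d := by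
        rw [div_add' _ _ _ hd.ne', div_le_div_iff_of_pos_right hd]; linarith
      have h3 : ⌊(s' - T₀) / d⌋ + 1 ≤ ⌊(s - T₀) / d⌋ := by
        calc ⌊(s' - T₀) / d⌋ + 1 = ⌊(s' - T₀) / d + 1⌋ := by rw [Int.floor_add_one]
        _ ≤ _ := Int.floor_mono h2
      simp only at heq; omega
  have hFfin : F.Finite := by
    refine Set.Finite.of_finite_image (Set.Finite.subset
      (Set.finite_Icc (⌊(-Ts) / d⌋) ⌊X / d⌋) ?_) hinj
    rintro k ⟨s, hs, rfl⟩
    constructor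
    · exact Int.floor_mono (div_le_div_of_nonneg_right
        (show -Ts ≤ s - T₀ by linarith [hs.2.1]) hd.le)
    · exact Int.floor_mono (div_le_div_of_nonneg_right
        (show s - T₀ ≤ X by linarith [hs.2.2]) hd.le)
  -- the initial switch near T₀
  obtain ⟨sstar, hsstar_mem, hsstar_sw⟩ :=
    exists_switch_of_ne σ (sampleTime_le hTs T₀) (Ne.symm hmm)
  have hsstarF : sstar ∈ F :=
    ⟨hsstar_sw, lt_of_lt_of_le (by linarith [lt_sampleTime_add hTs T₀]) hsstar_mem.1,
      lt_of_le_of_lt hsstar_mem.2 ht⟩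
  set Fs : Finset ℝ := hFfin.toFinset with hFs_def
  have hmemFs : ∀ {s : ℝ}, s ∈ Fs ↔ s ∈ F := fun {s} => hFfin.mem_toFinset
  have hFsne : Fs.Nonempty := ⟨sstar, hmemFs.mpr hsstarF⟩
  set s₀ := Fs.min' hFsne with hs₀_def
  set s₁ := Fs.max' hFsne with hs₁_def
  have hs₀F : s₀ ∈ F := hmemFs.mp (Fs.min'_mem hFsne)
  have hs₁F : s₁ ∈ F := hmemFs.mp (Fs.max'_mem hFsne)
  have hs₀T : s₀ ≤ T₀ := le_trans (Fs.min'_le _ (hmemFs.mpr hsstarF)) hsstar_mem.2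
  have hs₀gt : T₀ - Ts < s₀ := hs₀F.2.1
  have hs₁lt : s₁ < t := hs₁F.2.2
  -- interval length function
  set L : ℝ → ℝ := fun s => min (s + Ts) t - max s T₀ with hL_def
  have hLnn : ∀ s ∈ F, 0 ≤ L s := by
    intro s hs
    have h1 : T₀ - Ts < s := hs.2.1
    have h2 : s < t := hs.2.2
    simp only [hL_def, sub_nonneg, le_min_iff, max_le_iff]
    exact ⟨⟨by linarith, by linarith⟩, ⟨h2.le, by linarith⟩⟩
  have hLle : ∀ s : ℝ, L s ≤ Ts := fun s => by
    simp only [hL_def]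
    linarith [min_le_left (s + Ts) t, le_max_left s T₀]
  -- coverage of the mismatch set
  set M : Set ℝ := {τ : ℝ | τ ∈ Set.Ico T₀ t ∧ σ τ ≠ σ (sampleTime Ts τ)} with hM_def
  have hcover : M ⊆ ⋃ s ∈ Fs, Set.Ico (max s T₀) (min (s + Ts) t) := by
    rintro τ ⟨⟨hτ1, hτ2⟩, hτne⟩
    obtain ⟨s, hsmem, hssw⟩ := exists_switch_of_ne σ (sampleTime_le hTs τ) (Ne.symm hτne)
    have hs1 : T₀ - Ts < s := by
      have := lt_sampleTime_add hTs τ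
      linarith [hsmem.1]
    have hsF : s ∈ F := ⟨hssw, hs1, lt_of_le_of_lt hsmem.2 hτ2⟩
    refine Set.mem_biUnion (hmemFs.mpr hsF) ?_
    refine ⟨max_le hsmem.2 hτ1, lt_min ?_ hτ2⟩
    linarith [lt_sampleTime_add hTs τ, hsmem.1]
  have hvol : volume M ≤ ENNReal.ofReal (∑ s ∈ Fs, L s) := by
    calc volume M ≤ volume (⋃ s ∈ Fs, Set.Ico (max s T₀) (min (s + Ts) t)) :=
          measure_mono hcover
    _ ≤ ∑ s ∈ Fs, volume (Set.Ico (max s T₀) (min (s + Ts) t)) :=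
          measure_biUnion_finset_le Fs _
    _ = ∑ s ∈ Fs, ENNReal.ofReal (L s) := by
          refine Finset.sum_congr rfl fun s hs => ?_
          rw [Real.volume_Ico]
    _ = ENNReal.ofReal (∑ s ∈ Fs, L s) :=
          (ENNReal.ofReal_sum_of_nonneg fun s hs => hLnn s (hmemFs.mp hs)).symm
  have hμle : mismatchTime Ts σ T₀ t ≤ ∑ s ∈ Fs, L s := by
    have h1 : mismatchTime Ts σ T₀ t = (volume M).toReal := rfl
    rw [h1]
    calc (volume M).toReal ≤ (ENNReal.ofReal (∑ s ∈ Fs, L s)).toReal :=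
          ENNReal.toReal_mono ENNReal.ofReal_ne_top hvol
    _ = ∑ s ∈ Fs, L s := ENNReal.toReal_ofReal
          (Finset.sum_nonneg fun s hs => hLnn s (hmemFs.mp hs))
  -- counting via disjointness
  have hdisj : (↑Fs : Set ℝ).PairwiseDisjoint (fun s => Set.Ico s (s + d)) := by
    intro a ha b hb hab
    have haF : a ∈ F := hmemFs.mp (Finset.mem_coe.mp ha)
    have hbF : b ∈ F := hmemFs.mp (Finset.mem_coe.mp hb)
    rcases lt_or_gt_of_ne hab with h | h
    · have hba := hsep a haF b hbF h
      refine Set.disjoint_left.mpr fun x hx hx' => ?_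
      have h1 := hx.2
      have h2 := hx'.1
      linarith
    · have hba := hsep b hbF a haF h
      refine Set.disjoint_left.mpr fun x hx hx' => ?_
      have h1 := hx.1
      have h2 := hx'.2
      linarith
  have hs₀₁ : s₀ ≤ s₁ := Fs.min'_le s₁ (Fs.max'_mem hFsne)
  have hcount : (Fs.card : ℝ) * d ≤ s₁ + d - s₀ := by
    have h1 : ∑ s ∈ Fs, volume (Set.Ico s (s + d)) = volume (⋃ s ∈ Fs, Set.Ico s (s + d)) :=
      (measure_biUnion_finset hdisj fun s _ => measurableSet_Ico).symm
    have h2 : (⋃ s ∈ Fs, Set.Ico s (s + d)) ⊆ Set.Ico s₀ (s₁ + d) := by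
      intro x hx
      simp only [Set.mem_iUnion, Set.mem_Ico] at hx ⊢
      obtain ⟨s, hs, hx1, hx2⟩ := hx
      exact ⟨le_trans (Fs.min'_le s hs) hx1, lt_of_lt_of_le hx2 (by linarith [Fs.le_max' s hs])⟩
    have h4 : ∑ s ∈ Fs, volume (Set.Ico s (s + d)) = ENNReal.ofReal ((Fs.card : ℝ) * d) := by
      have he : ∀ s ∈ Fs, volume (Set.Ico s (s + d)) = ENNReal.ofReal d := by
        intro s _
        rw [Real.volume_Ico]
        congr 1
        ring
      rw [Finset.sum_congr rfl he, Finset.sum_const, nsmul_eq_mul,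
        ← ENNReal.ofReal_natCast, ← ENNReal.ofReal_mul (by positivity)]
    have h5 : ENNReal.ofReal ((Fs.card : ℝ) * d) ≤ ENNReal.ofReal (s₁ + d - s₀) := by
      rw [← h4, h1]
      exact (measure_mono h2).trans_eq Real.volume_Ico
    exact (ENNReal.ofReal_le_ofReal_iff (by linarith)).mp h5
  -- final arithmetic
  by_cases hcase : s₀ = s₁
  · have hFs_eq : Fs = {s₀} := Finset.eq_singleton_iff_unique_mem.mpr
      ⟨Fs.min'_mem hFsne, fun x hx =>
        le_antisymm (hcase ▸ Fs.le_max' x hx) (Fs.min'_le x hx)⟩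
    have hsum : ∑ s ∈ Fs, L s ≤ Ts := by
      rw [hFs_eq, Finset.sum_singleton]
      exact hLle s₀
    have hpos : 0 < X / n := by positivity
    linarith [hμle]
  · have h01 : s₀ < s₁ := lt_of_le_of_ne hs₀₁ hcase
    have h2C : 2 ≤ Fs.card := Finset.one_lt_card.mpr
      ⟨s₀, Fs.min'_mem hFsne, s₁, Fs.max'_mem hFsne, hcase⟩
    set C : ℝ := (Fs.card : ℝ) with hC_def
    have hC2 : (2 : ℝ) ≤ C := by rw [hC_def]; exact_mod_cast h2C
    have hs₁e : s₁ ∈ Fs.erase s₀ := Finset.mem_erase.mpr ⟨Ne.symm hcase, Fs.max'_mem hFsne⟩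
    have hsplit : ∑ s ∈ Fs, L s = L s₀ + (L s₁ + ∑ s ∈ (Fs.erase s₀).erase s₁, L s) := by
      rw [Finset.add_sum_erase _ L hs₁e, Finset.add_sum_erase _ L (Fs.min'_mem hFsne)]
    have hrestcard : ((Fs.erase s₀).erase s₁).card = Fs.card - 2 := by
      rw [Finset.card_erase_of_mem hs₁e, Finset.card_erase_of_mem (Fs.min'_mem hFsne)]
      omega
    have hrest : ∑ s ∈ (Fs.erase s₀).erase s₁, L s ≤ (C - 2) * Ts := by
      calc ∑ s ∈ (Fs.erase s₀).erase s₁, L s ≤ ((Fs.erase s₀).erase s₁).card • Ts :=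
            Finset.sum_le_card_nsmul _ _ _ fun x _ => hLle x
      _ = ((Fs.card - 2 : ℕ) : ℝ) * Ts := by rw [hrestcard, nsmul_eq_mul]
      _ = (C - 2) * Ts := by rw [Nat.cast_sub h2C]; norm_num [hC_def]
    have hL0 : L s₀ ≤ s₀ + Ts - T₀ := by
      simp only [hL_def]
      linarith [min_le_left (s₀ + Ts) t, le_max_right s₀ T₀]
    have hL1b : L s₁ ≤ t - s₁ := by
      simp only [hL_def]
      linarith [min_le_right (s₁ + Ts) t, le_max_left s₁ T₀]
    have h1 : ∑ s ∈ Fs, L s ≤ s₀ + Ts - T₀ + (t - s₁) + (C - 2) * Ts := by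
      rw [hsplit]
      linarith [hrest, hL0, hL1b]
    have h2 : ∑ s ∈ Fs, L s ≤ C * Ts := by
      rw [hsplit]
      linarith [hrest, hLle s₀, hLle s₁]
    have := mismatch_arith hTs hN hd_def hTsd hX_def hX0 hcount h1 h2
    linarith [hμle]
end

section
/- Let m ∈ ℕ, n ∈ ℕ, T_s > 0, ε > 0. There exists a piecewise constant switching signal σ with dwell time n·T_s and a time t ≥ m·n·T_s such that the total mismatch time satisfies μ(t, 0) ≥ t/n − (T_s/n + ε). Concretely, with switches at k·n·T_s + ε/m for k = 1,…,m and t = m·n·T_s + T_s, one has μ(t,0) = m·T_s − ε = t/n − (T_s/n + ε). -/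
open MeasureTheory

lemma gap_right (S : Finset ℝ) (s : ℝ) : ∃ η > 0, ∀ p ∈ S, p ≤ s ∨ s + η ≤ p := by
  classical
  set S' := S.filter (fun p => s < p) with hS'
  rcases S'.eq_empty_or_nonempty with h | h
  · refine ⟨1, one_pos, fun p hp => ?_⟩
    left
    by_contra hps
    push_neg at hps
    have : p ∈ S' := Finset.mem_filter.mpr ⟨hp, hps⟩
    simp [h] at this
  · refine ⟨S'.min' h - s, ?_, fun p hp => ?_⟩
    · have := (Finset.mem_filter.mp (S'.min'_mem h)).2
      linarith
    · by_cases hps : p ≤ s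
      · exact Or.inl hps
      · push_neg at hps
        have hpS' : p ∈ S' := Finset.mem_filter.mpr ⟨hp, hps⟩
        have := S'.min'_le p hpS'
        right; linarith

lemma gap_both (S : Finset ℝ) (s : ℝ) (hs : s ∉ S) :
    ∃ η > 0, ∀ p ∈ S, p ≤ s - η ∨ s + η ≤ p := by
  classical
  rcases S.eq_empty_or_nonempty with h | h
  · exact ⟨1, one_pos, fun p hp => by simp [h] at hp⟩
  · have hne : (S.image fun p => |p - s|).Nonempty := h.image _
    refine ⟨(S.image fun p => |p - s|).min' hne, ?_, fun p hp => ?_⟩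
    · have hmem := (S.image fun p => |p - s|).min'_mem hne
      rcases Finset.mem_image.mp hmem with ⟨q, hq, hq'⟩
      rw [← hq']
      have hqs : q ≠ s := fun h' => hs (h' ▸ hq)
      exact abs_pos.mpr (sub_ne_zero.mpr hqs)
    · have hle : (S.image fun p => |p - s|).min' hne ≤ |p - s| :=
        Finset.min'_le _ _ (Finset.mem_image_of_mem _ hp)
      rcases le_abs.mp hle with h1 | h1
      · right; linarith
      · left; linarith

open Classical in
/-- the switching signal: counts switch points `k d + ε'` (k = 1..m) below `τ`. -/
noncomputable def sig (d e : ℝ) (m : ℕ) (τ : ℝ) : ℕ :=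
  ((Finset.Icc 1 m).filter (fun k : ℕ => (k : ℝ) * d + e ≤ τ)).card

/-- the set of switch points. -/
noncomputable def swpts (d e : ℝ) (m : ℕ) : Finset ℝ :=
  (Finset.Icc 1 m).image (fun k : ℕ => (k : ℝ) * d + e)

lemma sig_congr {d e : ℝ} {m : ℕ} {u s : ℝ}
    (h : ∀ p ∈ swpts d e m, (p ≤ u ↔ p ≤ s)) : sig d e m u = sig d e m s := by
  classical
  unfold sig
  have hfilter : ((Finset.Icc 1 m).filter (fun k : ℕ => (k : ℝ) * d + e ≤ u))
      = ((Finset.Icc 1 m).filter (fun k : ℕ => (k : ℝ) * d + e ≤ s)) := by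
    apply Finset.filter_congr
    intro k hk
    have hpm : ((k : ℝ) * d + e) ∈ swpts d e m :=
    Finset.mem_image_of_mem (fun k : ℕ => (k : ℝ) * d + e) hk
    have := h ((k : ℝ) * d + e) hpm
    simpa using this
  simp only [hfilter]

lemma not_switch_of_notMem {d e : ℝ} {m : ℕ} {s : ℝ} (hs : s ∉ swpts d e m) :
    ¬ IsSwitchTime (sig d e m) s := by
  rcases gap_both _ s hs with ⟨η, hη, hgap⟩
  refine not_not_intro ⟨η, hη, fun u hu => ?_⟩
  rcases abs_lt.mp hu with ⟨h1, h2⟩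
  refine sig_congr (fun p hp => ?_)
  rcases hgap p hp with h | h
  · constructor <;> intro <;> linarith
  · constructor <;> intro <;> linarith

lemma rpc_sig (d e : ℝ) (m : ℕ) : RightPiecewiseConstant (sig d e m) := by
  intro s
  rcases gap_right (swpts d e m) s with ⟨η, hη, hgap⟩
  refine ⟨η, hη, fun u hu => ?_⟩
  rcases hu with ⟨h1, h2⟩
  refine sig_congr (fun p hp => ?_)
  rcases hgap p hp with h | h
  · constructor <;> intro <;> linarith
  · constructor <;> intro <;> linarith

lemma switch_mem {d e : ℝ} {m : ℕ} {s : ℝ} (hs : IsSwitchTime (sig d e m) s) :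
    s ∈ swpts d e m := by
  by_contra h; exact not_switch_of_notMem h hs

lemma dwell_sig (d e : ℝ) (m : ℕ) (hd : 0 ≤ d) (hed : e ≤ d) (he : 0 < e) :
    HasDwellTime (sig d e m) d := by
  constructor
  · intro s t hs ht hst
    rcases Finset.mem_image.mp (switch_mem hs) with ⟨j, hj, rfl⟩
    rcases Finset.mem_image.mp (switch_mem ht) with ⟨k, hk, rfl⟩
    have hjk : (j : ℝ) * d < (k : ℝ) * d := by linarith
    have hjk' : j < k := by
      by_contra h
      push_neg at h
      have : (k : ℝ) ≤ (j : ℝ) := Nat.cast_le.mpr h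
      nlinarith
    have h1 : (j : ℝ) + 1 ≤ (k : ℝ) := by exact_mod_cast hjk'
    nlinarith
  · intro s hsI hsw
    rcases Finset.mem_image.mp (switch_mem hsw) with ⟨k, hk, rfl⟩
    have hk1 : 1 ≤ k := (Finset.mem_Icc.mp hk).1
    have hk1' : (1 : ℝ) ≤ (k : ℝ) := by exact_mod_cast hk1
    rcases hsI with ⟨h0, hlt⟩
    nlinarith

lemma sig_eval_mid {d e : ℝ} {m k : ℕ} (hk1 : 1 ≤ k) (hkm : k ≤ m)
    (hd : 0 ≤ d) (he : 0 < e) {τ : ℝ}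
    (h1 : (k : ℝ) * d + e ≤ τ) (h2 : τ < (k : ℝ) * d + d) :
    sig d e m τ = k := by
  classical
  unfold sig
  have : (Finset.Icc 1 m).filter (fun j : ℕ => (j : ℝ) * d + e ≤ τ) = Finset.Icc 1 k := by
    ext j
    simp only [Finset.mem_filter, Finset.mem_Icc]
    constructor
    · rintro ⟨⟨hj1, hjm⟩, hle⟩
      refine ⟨hj1, ?_⟩
      by_contra h
      push_neg at h
      have : (k : ℝ) + 1 ≤ (j : ℝ) := by exact_mod_cast h
      nlinarith
    · rintro ⟨hj1, hjk⟩
      refine ⟨⟨hj1, le_trans hjk hkm⟩, ?_⟩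
      have : (j : ℝ) ≤ (k : ℝ) := Nat.cast_le.mpr hjk
      nlinarith
  rw [this, Nat.card_Icc]; omega

lemma sig_eval_sample {d e : ℝ} {m k : ℕ} (hk1 : 1 ≤ k) (hkm : k ≤ m)
    (hd : 0 ≤ d) (he : 0 < e) (hed : e ≤ d) :
    sig d e m ((k : ℝ) * d) = k - 1 := by
  classical
  unfold sig
  have : (Finset.Icc 1 m).filter (fun j : ℕ => (j : ℝ) * d + e ≤ (k : ℝ) * d)
      = Finset.Icc 1 (k - 1) := by
    ext j
    simp only [Finset.mem_filter, Finset.mem_Icc]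
    constructor
    · rintro ⟨⟨hj1, hjm⟩, hle⟩
      refine ⟨hj1, ?_⟩
      have hjk : j < k := by
        by_contra h
        push_neg at h
        have : (k : ℝ) ≤ (j : ℝ) := Nat.cast_le.mpr h
        nlinarith
      omega
    · rintro ⟨hj1, hjk⟩
      have hjk' : j + 1 ≤ k := by omega
      refine ⟨⟨hj1, by omega⟩, ?_⟩
      have : (j : ℝ) + 1 ≤ (k : ℝ) := by exact_mod_cast hjk'
      nlinarith
  rw [this, Nat.card_Icc]; omega

/-- Near-tightness of the mismatch bound: for any `m, n` and `ε > 0` there is a switching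
signal `σ` with dwell time `n Tₛ` and a time `t ≥ m n Tₛ` such that
`μ(t, 0) ≥ t / n - (Tₛ / n + ε)`. -/
theorem exists_mismatchTime_ge (Ts ε : ℝ) (hTs : 0 < Ts) (hε : 0 < ε) (m n : ℕ) :
    ∃ σ : ℝ → ℕ, RightPiecewiseConstant σ ∧ HasDwellTime σ (n * Ts) ∧
      ∃ t : ℝ, (m : ℝ) * n * Ts ≤ t ∧
        t / n - (Ts / n + ε) ≤ mismatchTime Ts σ 0 t := by
  rcases Nat.eq_zero_or_pos n with hn0 | hn
  · subst hn0
    refine ⟨fun _ => 0, fun s => ⟨1, one_pos, fun u _ => rfl⟩, ⟨?_, ?_⟩, 0, by simp, ?_⟩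
    · intro s t _ _ hst
      simp only [Nat.cast_zero, zero_mul]
      linarith
    · intro s hs
      simp only [Nat.cast_zero, zero_mul, Set.mem_Ico] at hs
      intro _
      exact absurd hs.2 (not_lt.mpr hs.1)
    · have h0 : ((0:ℕ):ℝ) = 0 := by norm_num
      rw [h0, div_zero, div_zero]
      have := ENNReal.toReal_nonneg (a := volume {τ : ℝ | τ ∈ Set.Ico (0:ℝ) 0 ∧
        (fun _ => 0) τ ≠ (fun _ => (0:ℕ)) (sampleTime Ts τ)})
      unfold mismatchTime
      linarith
  · -- main case : n ≥ 1
    have hnR : (1 : ℝ) ≤ (n : ℝ) := by exact_mod_cast hn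
    have hnne : (n : ℝ) ≠ 0 := by positivity
    set d := (n : ℝ) * Ts with hd_def
    have hd0 : 0 < d := by positivity
    have hTsd : Ts ≤ d := by nlinarith
    set e := min (Ts / 2) (ε / (m + 1)) with he_def
    have he : 0 < e := lt_min (by linarith) (by positivity)
    have heTs : e < Ts := lt_of_le_of_lt (min_le_left _ _) (by linarith)
    have hed : e ≤ d := le_trans heTs.le hTsd
    have hme : (m : ℝ) * e ≤ ε := by
      have h1 : e ≤ ε / (m + 1) := min_le_right _ _
      have h2 : (m : ℝ) * e ≤ (m : ℝ) * (ε / (m + 1)) :=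
        mul_le_mul_of_nonneg_left h1 (Nat.cast_nonneg m)
      have hm1 : (0 : ℝ) < (m : ℝ) + 1 := by positivity
      have h3 : (m : ℝ) * (ε / (m + 1)) ≤ ε := by
        rw [mul_div_assoc', div_le_iff₀ hm1]
        nlinarith [Nat.cast_nonneg (α := ℝ) m]
      linarith
    refine ⟨sig d e m, rpc_sig d e m, dwell_sig d e m hd0.le hed he, (m : ℝ) * d + Ts, ?_, ?_⟩
    · rw [hd_def]; nlinarith
    · -- the measure bound
      set t := (m : ℝ) * d + Ts with ht_def
      have hbound : (m : ℝ) * (Ts - e) ≤ mismatchTime Ts (sig d e m) 0 t := by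
        unfold mismatchTime
        set M := {τ : ℝ | τ ∈ Set.Ico (0:ℝ) t ∧ sig d e m τ ≠ sig d e m (sampleTime Ts τ)}
          with hM_def
        set U := ⋃ k ∈ Finset.Icc 1 m, Set.Ico ((k:ℝ) * d + e) ((k:ℝ) * d + Ts) with hU_def
        have hsub : U ⊆ M := by
          intro τ hτ
          rw [hU_def, Set.mem_iUnion₂] at hτ
          rcases hτ with ⟨k, hk, hτ1, hτ2⟩
          rcases Finset.mem_Icc.mp hk with ⟨hk1, hkm⟩
          have hk1R : (1 : ℝ) ≤ (k : ℝ) := by exact_mod_cast hk1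
          have hkmR : (k : ℝ) ≤ (m : ℝ) := by exact_mod_cast hkm
          have hτd : τ < (k:ℝ) * d + d := by linarith
          refine ⟨⟨by nlinarith, by nlinarith⟩, ?_⟩
          have hsamp : sampleTime Ts τ = (k : ℝ) * d := by
            unfold sampleTime
            have hfloor : ⌊τ / Ts⌋ = ((k * n : ℕ) : ℤ) := by
              rw [Int.floor_eq_iff]
              constructor
              · rw [le_div_iff₀ hTs]
                push_cast
                nlinarith
              · rw [div_lt_iff₀ hTs]
                push_cast
                nlinarith
            rw [hfloor]
            push_cast
            rw [hd_def]
            ring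
          rw [hsamp, sig_eval_mid hk1 hkm hd0.le he hτ1 hτd,
            sig_eval_sample hk1 hkm hd0.le he hed]
          omega
        have hdisj : (↑(Finset.Icc 1 m) : Set ℕ).PairwiseDisjoint
            (fun k : ℕ => Set.Ico ((k:ℝ) * d + e) ((k:ℝ) * d + Ts)) := by
          intro j hj k hk hjk
          simp only [Finset.coe_Icc, Set.mem_Icc] at hj hk
          have key : ∀ a b : ℕ, a < b →
              Disjoint (Set.Ico ((a:ℝ) * d + e) ((a:ℝ) * d + Ts))
                (Set.Ico ((b:ℝ) * d + e) ((b:ℝ) * d + Ts)) := by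
            intro a b hab
            have h1 : (a : ℝ) + 1 ≤ (b : ℝ) := by exact_mod_cast hab
            apply Set.Ico_disjoint_Ico.mpr
            have : (a : ℝ) * d + Ts ≤ (b : ℝ) * d + e := by nlinarith
            calc min ((a:ℝ) * d + Ts) ((b:ℝ) * d + Ts) ≤ (a:ℝ) * d + Ts := min_le_left _ _
              _ ≤ (b:ℝ) * d + e := this
              _ ≤ max ((a:ℝ) * d + e) ((b:ℝ) * d + e) := le_max_right _ _
          rcases lt_or_gt_of_ne hjk with h | h
          · exact key j k h
          · exact (key k j h).symm
        have hUvol : volume U = (m : ENNReal) * ENNReal.ofReal (Ts - e) := by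
          rw [hU_def, measure_biUnion_finset hdisj (fun k _ => measurableSet_Ico)]
          have : ∀ k ∈ Finset.Icc 1 m,
              volume (Set.Ico ((k:ℝ) * d + e) ((k:ℝ) * d + Ts)) = ENNReal.ofReal (Ts - e) := by
            intro k _
            rw [Real.volume_Ico]
            congr 1
            ring
          rw [Finset.sum_congr rfl this, Finset.sum_const, Nat.card_Icc]
          simp
        have hMsub : M ⊆ Set.Ico 0 t := fun τ hτ => hτ.1
        have hMfin : volume M ≠ ⊤ := by
          refine ne_top_of_le_ne_top ?_ (measure_mono hMsub)
          rw [Real.volume_Ico]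
          exact ENNReal.ofReal_ne_top
        have hle : volume U ≤ volume M := measure_mono hsub
        have hUre : (volume U).toReal = (m : ℝ) * (Ts - e) := by
          rw [hUvol, ENNReal.toReal_mul, ENNReal.toReal_ofReal (by linarith)]
          simp
        calc (m : ℝ) * (Ts - e) = (volume U).toReal := hUre.symm
          _ ≤ (volume M).toReal := ENNReal.toReal_mono hMfin hle
      have harith : t / (n:ℝ) - (Ts / (n:ℝ) + ε) = (m:ℝ) * Ts - ε := by
        rw [ht_def, hd_def]
        field_simp
        ring
      rw [harith]
      nlinarith
end
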